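/- If the reduced Burau representation of the n-strand braid group admitted a projlen-type statistic exactly proportional to Garside length, it would be faithful; the concrete instance provable for matrices: for every matrix M in the image of the homomorphism from B3 = <s1,s2 | s1s2s1=s2s1s2> to GL_2(Z[v,v^{-1}]) sending s1 to A1 and s2 to A2, if projlen(M) = 0 then M = (v^3*J2)^d for some integer d; and (v^3*J2)^d = Identity if and only if d = 0. Consequently the only element of B3 mapping to the identity matrix is the identity braid. -/

import Mathlib

open LaurentPolynomial FreeGroup

/-- The two reduced Burau matrices `A1, A2` for the 3-strand braid group,
over the Laurent polynomial ring `ℤ[v,v⁻¹]` (here `v = T 1`). -/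
noncomputable def BurauA : Fin 2 → Matrix (Fin 2) (Fin 2) (LaurentPolynomial ℤ)
  | 0 => !![-(T 1)^2, -(T 1); 0, 1]
  | 1 => !![1, 0; -(T 1), -(T 1)^2]

/-- The braid relation of the 3-strand braid group, as an element of the free group
on generators `s1 = of 0`, `s2 = of 1`. -/
def braidRels3 : Set (FreeGroup (Fin 2)) :=
  { of 0 * of 1 * of 0 * (of 1 * of 0 * of 1)⁻¹ }

/-- The 3-strand braid group, presented by the Artin generators and the braid relation. -/
def B3 : Type := PresentedGroup braidRels3

noncomputable instance : Group B3 := by unfold B3; infer_instance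

/-- The set of exponents of `v` occurring (with nonzero coefficient) in an entry
of a 2×2 matrix of Laurent polynomials. -/
def matExps (A : Matrix (Fin 2) (Fin 2) (LaurentPolynomial ℤ)) : Set ℤ :=
  {k | ∃ i j, (show ℤ →₀ ℤ from (A i j).coeff) k ≠ 0}

/-- `deg` of a matrix: the highest power of `v` occurring in an entry. -/
noncomputable def matDeg (A : Matrix (Fin 2) (Fin 2) (LaurentPolynomial ℤ)) : ℤ := sSup (matExps A)

/-- `val` of a matrix: the lowest power of `v` occurring in an entry. -/
noncomputable def matVal (A : Matrix (Fin 2) (Fin 2) (LaurentPolynomial ℤ)) : ℤ := sInf (matExps A)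

/-- `projlen` of a matrix: `deg` minus `val`. -/
noncomputable def projlen (A : Matrix (Fin 2) (Fin 2) (LaurentPolynomial ℤ)) : ℤ := matDeg A - matVal A

/-- The 2×2 antidiagonal permutation matrix `J2`. -/
noncomputable def J2 : Matrix (Fin 2) (Fin 2) (LaurentPolynomial ℤ) := !![0, 1; 1, 0]


abbrev LP := LaurentPolynomial ℤ
abbrev M2 := Matrix (Fin 2) (Fin 2) LP

def co (f : LP) (k : ℤ) : ℤ := (show ℤ →₀ ℤ from f.coeff) k

lemma co_add (f g : LP) (k : ℤ) : co (f + g) k = co f k + co g k := rfl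
lemma co_neg (f : LP) (k : ℤ) : co (-f) k = - co f k := rfl
lemma co_zero (k : ℤ) : co 0 k = 0 := rfl
lemma co_T (n k : ℤ) : co (T n) k = if n = k then 1 else 0 := T_apply k n
lemma co_one (k : ℤ) : co 1 k = if k = 0 then 1 else 0 := by
  rw [show (1 : LP) = T 0 from rfl, co_T]; simp [eq_comm]
lemma co_mul_T (f : LP) (n k : ℤ) : co (f * T n) k = co f (k - n) := by
  have := AddMonoidAlgebra.coeff_mul_single_apply f (1 : ℤ) n k
  rw [mul_one] at this
  exact this
lemma co_T_mul (f : LP) (n k : ℤ) : co (T n * f) k = co f (k - n) := by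
  have := AddMonoidAlgebra.coeff_single_mul_apply f (1 : ℤ) n k
  rw [one_mul] at this
  rw [show -n + k = k - n from by ring] at this
  exact this
lemma co_mul_negT (f : LP) (n k : ℤ) : co (f * (-T n)) k = - co f (k - n) := by
  rw [mul_neg, co_neg, co_mul_T]


lemma mem_matExps {A : M2} {k : ℤ} : k ∈ matExps A ↔ ∃ i j, co (A i j) k ≠ 0 := Iff.rfl

/-- bounded support description of a matrix -/
def Bnd (A : M2) (lo hi : ℤ) : Prop :=
  (∃ i j, co (A i j) lo ≠ 0) ∧ (∃ i j, co (A i j) hi ≠ 0) ∧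
    ∀ i j k, co (A i j) k ≠ 0 → lo ≤ k ∧ k ≤ hi

lemma Bnd.matDeg_eq {A : M2} {lo hi : ℤ} (h : Bnd A lo hi) : matDeg A = hi := by
  obtain ⟨-, hhi, hb⟩ := h
  refine le_antisymm (csSup_le ⟨hi, hhi⟩ ?_) (le_csSup ⟨hi, ?_⟩ hhi)
  · rintro x ⟨i, j, hx⟩; exact (hb i j x hx).2
  · rintro x ⟨i, j, hx⟩; exact (hb i j x hx).2

lemma Bnd.matVal_eq {A : M2} {lo hi : ℤ} (h : Bnd A lo hi) : matVal A = lo := by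
  obtain ⟨hlo, -, hb⟩ := h
  refine le_antisymm (csInf_le ⟨lo, ?_⟩ hlo) (le_csInf ⟨lo, hlo⟩ ?_)
  · rintro x ⟨i, j, hx⟩; exact (hb i j x hx).1
  · rintro x ⟨i, j, hx⟩; exact (hb i j x hx).1

lemma Bnd.projlen_eq {A : M2} {lo hi : ℤ} (h : Bnd A lo hi) : projlen A = hi - lo := by
  rw [projlen, h.matDeg_eq, h.matVal_eq]

lemma Bnd_one : Bnd (1 : M2) 0 0 := by
  have h1 : ∀ i j : Fin 2, co ((1 : M2) i j) = co (if i = j then (1:LP) else 0) := by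
    intro i j; rw [Matrix.one_apply]
  refine ⟨⟨0, 0, ?_⟩, ⟨0, 0, ?_⟩, ?_⟩
  · rw [h1]; simp [co_one]
  · rw [h1]; simp [co_one]
  · intro i j k hk
    rw [h1] at hk
    by_cases hij : i = j <;> simp [hij, co_one, co_zero] at hk
    omega

lemma Bnd_smulT {A : M2} {lo hi : ℤ} (c : ℤ) (h : Bnd A lo hi) :
    Bnd ((T c : LP) • A) (c + lo) (c + hi) := by
  obtain ⟨⟨i1, j1, h1⟩, ⟨i2, j2, h2⟩, hb⟩ := h
  have key : ∀ i j k, co (((T c : LP) • A) i j) k = co (A i j) (k - c) := by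
    intro i j k
    rw [Matrix.smul_apply, smul_eq_mul, co_T_mul]
  refine ⟨⟨i1, j1, ?_⟩, ⟨i2, j2, ?_⟩, ?_⟩
  · rw [key]; simpa using h1
  · rw [key]; simpa using h2
  · intro i j k hk
    rw [key] at hk
    have := hb i j (k - c) hk
    omega

def oth : Fin 2 → Fin 2 := ![1, 0]

lemma J2_mul_apply (A : M2) (i j : Fin 2) : (J2 * A) i j = A (oth i) j := by
  fin_cases i <;> fin_cases j <;>
    simp [J2, oth, Matrix.mul_apply, Fin.sum_univ_two]

lemma mul_J2_apply (A : M2) (i j : Fin 2) : (A * J2) i j = A i (oth j) := by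
  fin_cases i <;> fin_cases j <;>
    simp [J2, oth, Matrix.mul_apply, Fin.sum_univ_two]

lemma oth_oth (i : Fin 2) : oth (oth i) = i := by fin_cases i <;> simp [oth]

lemma Bnd_J2_mul {A : M2} {lo hi : ℤ} (h : Bnd A lo hi) : Bnd (J2 * A) lo hi := by
  obtain ⟨⟨i1, j1, h1⟩, ⟨i2, j2, h2⟩, hb⟩ := h
  refine ⟨⟨oth i1, j1, ?_⟩, ⟨oth i2, j2, ?_⟩, ?_⟩
  · rw [J2_mul_apply, oth_oth]; exact h1
  · rw [J2_mul_apply, oth_oth]; exact h2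
  · intro i j k hk
    rw [J2_mul_apply] at hk
    exact hb _ _ _ hk

lemma Bnd_mul_J2 {A : M2} {lo hi : ℤ} (h : Bnd A lo hi) : Bnd (A * J2) lo hi := by
  obtain ⟨⟨i1, j1, h1⟩, ⟨i2, j2, h2⟩, hb⟩ := h
  refine ⟨⟨i1, oth j1, ?_⟩, ⟨i2, oth j2, ?_⟩, ?_⟩
  · rw [mul_J2_apply, oth_oth]; exact h1
  · rw [mul_J2_apply, oth_oth]; exact h2
  · intro i j k hk
    rw [mul_J2_apply] at hk
    exact hb _ _ _ hk


/-- normalized letter matrices -/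
lemma fin2 (i : Fin 2) : i = 0 ∨ i = 1 := by omega

noncomputable def Cm : Fin 2 → M2
  | 0 => !![-1, -(T 1); 0, T 2]
  | 1 => !![1, 0; -(T 1), -(T 2)]

noncomputable def prodC (l : List (Fin 2)) : M2 := (l.map Cm).prod

@[simp] lemma prodC_nil : prodC [] = 1 := rfl

lemma prodC_concat (l : List (Fin 2)) (i : Fin 2) :
    prodC (l ++ [i]) = prodC l * Cm i := by
  simp [prodC]

lemma prodC_cons (i : Fin 2) (l : List (Fin 2)) :
    prodC (i :: l) = Cm i * prodC l := by
  simp [prodC]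

/-- The inductive invariant for products of `k ≥ 1` letter matrices. -/
def InvW (W : M2) (k : ℤ) : Prop :=
  co (W 0 0) 0 ≠ 0 ∧ co (W 1 1) (2 * k) ≠ 0 ∧
  (∀ j : ℤ, 2 * k - 1 ≤ j → co (W 0 0) j = 0) ∧
  (∀ j : ℤ, 2 * k ≤ j → co (W 0 1) j = 0) ∧
  (∀ j : ℤ, 2 * k ≤ j → co (W 1 0) j = 0) ∧
  (∀ j : ℤ, 2 * k + 1 ≤ j → co (W 1 1) j = 0) ∧
  (∀ (i i' : Fin 2) (j : ℤ), j < 0 → co (W i i') j = 0)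

lemma InvW_base (i : Fin 2) : InvW (Cm i) 1 := by
  fin_cases i
  · refine ⟨by simp [Cm, co_neg, co_one], by simp [Cm, co_T], ?_, ?_, ?_, ?_, ?_⟩
    · intro j hj; simp [Cm, co_neg, co_one]; omega
    · intro j hj; simp [Cm, co_neg, co_T]; omega
    · intro j hj; simp [Cm, co_zero]
    · intro j hj; simp [Cm, co_T]; omega
    · intro i i' j hj; fin_cases i <;> fin_cases i' <;>
        simp [Cm, co_neg, co_one, co_T, co_zero] <;> omega
  · refine ⟨by simp [Cm, co_one], by simp [Cm, co_neg, co_T], ?_, ?_, ?_, ?_, ?_⟩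
    · intro j hj; simp [Cm, co_one]; omega
    · intro j hj; simp [Cm, co_zero]
    · intro j hj; simp [Cm, co_neg, co_T]; omega
    · intro j hj; simp [Cm, co_neg, co_T]; omega
    · intro i i' j hj; fin_cases i <;> fin_cases i' <;>
        simp [Cm, co_neg, co_one, co_T, co_zero] <;> omega

lemma InvW_step {W : M2} {k : ℤ} (h : InvW W k) (i : Fin 2) :
    InvW (W * Cm i) (k + 1) := by
  obtain ⟨ha0, hd2, ha, hb, hc, hd, hneg⟩ := h
  rcases fin2 i with rfl | rfl
  · have e0 : ∀ i' : Fin 2, (W * Cm 0) i' 0 = -(W i' 0) := by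
      intro i'; simp [Cm, Matrix.mul_apply, Fin.sum_univ_two]
    have e1 : ∀ i' : Fin 2, (W * Cm 0) i' 1 = W i' 0 * (-(T 1)) + W i' 1 * T 2 := by
      intro i'; simp [Cm, Matrix.mul_apply, Fin.sum_univ_two]
    have key : ∀ (i' : Fin 2) (j : ℤ),
        co ((W * Cm 0) i' 1) j = -co (W i' 0) (j - 1) + co (W i' 1) (j - 2) := by
      intro i' j; rw [e1, co_add, co_mul_negT, co_mul_T]
    refine ⟨?_, ?_, ?_, ?_, ?_, ?_, ?_⟩
    · rw [show ((0:Fin 2)) = 0 from rfl, e0, co_neg]; simpa using ha0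
    · rw [key]
      rw [hc (2 * (k+1) - 1) (by omega), show 2*(k+1)-2 = 2*k by ring]
      simpa using hd2
    · intro j hj; rw [e0, co_neg, ha j (by omega), neg_zero]
    · intro j hj; rw [key, ha (j-1) (by omega), hb (j-2) (by omega)]; ring
    · intro j hj; rw [e0, co_neg, hc j (by omega), neg_zero]
    · intro j hj; rw [key, hc (j-1) (by omega), hd (j-2) (by omega)]; ring
    · intro i i' j hj
      rcases fin2 i' with rfl | rfl
      · rw [e0, co_neg, hneg i 0 j hj, neg_zero]
      · rw [key, hneg i 0 (j-1) (by omega), hneg i 1 (j-2) (by omega)]; ring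
  · have f0 : ∀ i' : Fin 2, (W * Cm 1) i' 0 = W i' 0 + W i' 1 * (-(T 1)) := by
      intro i'; simp [Cm, Matrix.mul_apply, Fin.sum_univ_two]
    have f1 : ∀ i' : Fin 2, (W * Cm 1) i' 1 = W i' 1 * (-(T 2)) := by
      intro i'; simp [Cm, Matrix.mul_apply, Fin.sum_univ_two]
    have key : ∀ (i' : Fin 2) (j : ℤ),
        co ((W * Cm 1) i' 0) j = co (W i' 0) j - co (W i' 1) (j - 1) := by
      intro i' j; rw [f0, co_add, co_mul_negT]; ring
    have key1 : ∀ (i' : Fin 2) (j : ℤ),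
        co ((W * Cm 1) i' 1) j = -co (W i' 1) (j - 2) := by
      intro i' j; rw [f1, co_mul_negT]
    refine ⟨?_, ?_, ?_, ?_, ?_, ?_, ?_⟩
    · rw [key, hneg 0 1 (0-1) (by omega), sub_zero]; exact ha0
    · rw [key1, show 2*(k+1)-2 = 2*k by ring]; simpa using hd2
    · intro j hj; rw [key, ha j (by omega), hb (j-1) (by omega)]; ring
    · intro j hj; rw [key1, hb (j-2) (by omega), neg_zero]
    · intro j hj; rw [key, hc j (by omega), hd (j-1) (by omega)]; ring
    · intro j hj; rw [key1, hd (j-2) (by omega), neg_zero]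
    · intro i i' j hj
      rcases fin2 i' with rfl | rfl
      · rw [key, hneg i 0 j hj, hneg i 1 (j-1) (by omega)]; ring
      · rw [key1, hneg i 1 (j-2) (by omega), neg_zero]

lemma InvW_prodC : ∀ (l : List (Fin 2)), l ≠ [] → InvW (prodC l) l.length := by
  intro l
  induction l using List.reverseRecOn with
  | nil => intro h; exact absurd rfl h
  | append_singleton l i ih =>
    intro _
    rcases eq_or_ne l [] with rfl | hl
    · simpa [prodC] using InvW_base i
    · rw [prodC_concat]
      have := InvW_step (ih hl) i
      simpa [List.length_append] using this

lemma Bnd_prodC (l : List (Fin 2)) : Bnd (prodC l) 0 (2 * l.length) := by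
  rcases eq_or_ne l [] with rfl | hl
  · simpa using Bnd_one
  · obtain ⟨ha0, hd2, ha, hb, hc, hd, hneg⟩ := InvW_prodC l hl
    refine ⟨⟨0, 0, ha0⟩, ⟨1, 1, hd2⟩, ?_⟩
    intro i j k hk
    constructor
    · by_contra hlt
      exact hk (hneg i j k (by omega))
    · by_contra hlt
      push_neg at hlt
      apply hk
      rcases fin2 i with rfl | rfl <;> rcases fin2 j with rfl | rfl
      · exact ha k (by omega)
      · exact hb k (by omega)
      · exact hc k (by omega)
      · exact hd k (by omega)


lemma J2_mul_J2 : J2 * J2 = 1 := by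
  rw [J2, Matrix.mul_fin_two, Matrix.one_fin_two]
  norm_num

lemma smulT_mul (a b : ℤ) (A B : M2) :
    ((T a : LP) • A) * ((T b : LP) • B) = (T (a + b) : LP) • (A * B) := by
  rw [smul_mul_assoc, mul_smul_comm, smul_smul, ← T_add]

lemma Xpow_nat (n : ℕ) :
    ((T 3 : LP) • J2) ^ n = (T (3 * n) : LP) • (if Even n then (1 : M2) else J2) := by
  induction n with
  | zero => simp
  | succ n ih =>
    rw [pow_succ, ih, smulT_mul]
    rcases Nat.even_or_odd n with he | ho
    · rw [if_pos he, if_neg (by simp [Nat.even_add_one, he])]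
      push_cast
      rw [one_mul, show (3 * (n:ℤ) + 3) = 3 * ((n:ℤ)+1) by ring]
    · rw [if_neg (by simp [Nat.not_even_iff_odd.mpr ho]),
        if_pos (by simp [Nat.even_add_one, Nat.not_even_iff_odd.mpr ho]), J2_mul_J2]
      push_cast
      rw [show (3 * (n:ℤ) + 3) = 3 * ((n:ℤ)+1) by ring]

lemma Xzpow (m : ℤ) :
    ((T 3 : LP) • J2) ^ m = (T (3 * m) : LP) • (if Even m then (1 : M2) else J2) := by
  rcases m with n | n
  · rw [Int.ofNat_eq_coe, zpow_natCast, Xpow_nat]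
    norm_num [Int.even_coe_nat]
  · rw [zpow_negSucc, Xpow_nat]
    have hcast : Even (Int.negSucc n) ↔ Even (n + 1) := by
      rw [Int.negSucc_eq, even_neg]
      exact_mod_cast Int.even_coe_nat (n+1)
    rw [show (if Even (Int.negSucc n) then (1:M2) else J2)
        = (if Even (n+1) then (1:M2) else J2) from by simp only [hcast]]
    apply Matrix.inv_eq_right_inv
    rw [smulT_mul, show (3 * ((n+1:ℕ):ℤ) + 3 * Int.negSucc n) = 0 from by
      rw [Int.negSucc_eq]; push_cast; ring, T_zero]
    by_cases h : Even (n+1) <;> simp [h, J2_mul_J2]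

lemma T_eq_one_iff {n : ℤ} : (T n : LP) = 1 ↔ n = 0 := by
  constructor
  · intro h
    have h2 := congrArg (fun f => co f n) h
    simp only [co_T, if_pos rfl, co_one] at h2
    by_contra hn
    rw [if_neg hn] at h2
    exact one_ne_zero h2
  · rintro rfl; exact T_zero

lemma Xzpow_eq_one_iff (d : ℤ) : ((T 3 : LP) • J2) ^ d = 1 ↔ d = 0 := by
  constructor
  · intro h
    rw [Xzpow] at h
    rcases em (Even d) with hev | hod
    · rw [if_pos hev] at h
      have h00 := congrArg (fun A : M2 => A 0 0) h
      simp only [Matrix.smul_apply, Matrix.one_apply_eq, smul_eq_mul, mul_one] at h00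
      have := T_eq_one_iff.mp h00
      omega
    · rw [if_neg hod] at h
      have h00 := congrArg (fun A : M2 => A 0 0) h
      simp [Matrix.smul_apply, smul_eq_mul, J2, Matrix.one_apply] at h00
  · rintro rfl; rw [zpow_zero]


def mk3 : FreeGroup (Fin 2) →* B3 := PresentedGroup.mk braidRels3

lemma mk3_surjective : Function.Surjective mk3 :=
  fun g => PresentedGroup.mk_surjective braidRels3 g

def s1 : B3 := PresentedGroup.of 0
def s2 : B3 := PresentedGroup.of 1

lemma mk3_of (i : Fin 2) : mk3 (FreeGroup.of i) = PresentedGroup.of i := rfl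

lemma braid : s1 * s2 * s1 = s2 * s1 * s2 := by
  have h : mk3 (of 0 * of 1 * of 0 * (of 1 * of 0 * of 1)⁻¹) = 1 := by
    apply (QuotientGroup.eq_one_iff _).2
    exact Subgroup.subset_normalClosure rfl
  simp only [_root_.map_mul, _root_.map_inv] at h
  exact mul_inv_eq_one.mp h

noncomputable def xB : B3 := s1 * s2 * s1
noncomputable def yB : B3 := s1 * s2
noncomputable def zB : B3 := xB * xB

lemma hxs1 : xB * s1 = s2 * xB := by
  rw [xB]
  nth_rewrite 1 [braid]
  group

lemma hxs2 : xB * s2 = s1 * xB := by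
  rw [xB]
  nth_rewrite 2 [braid]
  group

lemma hy3 : yB * (yB * yB) = zB := by
  rw [yB, zB, xB]
  rw [show s1 * s2 * (s1 * s2 * (s1 * s2)) = s1 * s2 * s1 * (s2 * s1 * s2) from by group]
  rw [← braid]

lemma zB_def : zB = xB * xB := rfl

lemma hy3' : yB * yB * yB = zB := by rw [← hy3]; group

lemma hcx : Commute xB zB := by
  rw [zB]; exact (Commute.refl xB).mul_right (Commute.refl xB)

lemma hcy : Commute yB zB := by
  rw [← hy3]; exact (Commute.refl yB).mul_right ((Commute.refl yB).mul_right (Commute.refl yB))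

lemma zmx (m : ℤ) : zB ^ m * xB = xB * zB ^ m := ((hcx.zpow_right m).symm).eq
lemma zmy (m : ℤ) : zB ^ m * yB = yB * zB ^ m := ((hcy.zpow_right m).symm).eq
lemma zmx_mul (m : ℤ) (g : B3) : zB ^ m * (xB * g) = xB * (zB ^ m * g) := by
  rw [← mul_assoc, zmx, mul_assoc]
lemma zmy_mul (m : ℤ) (g : B3) : zB ^ m * (yB * g) = yB * (zB ^ m * g) := by
  rw [← mul_assoc, zmy, mul_assoc]
lemma zy_mul (g : B3) : zB * (yB * g) = yB * (zB * g) := by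
  rw [← mul_assoc, (hcy.symm).eq, mul_assoc]
lemma zm_succ (m : ℤ) : zB * zB ^ m = zB ^ (m + 1) := by
  rw [zpow_add_one]
  exact ((Commute.refl zB).zpow_right m).eq
lemma xx_mul (g : B3) : xB * (xB * g) = zB * g := by rw [← mul_assoc, ← zB_def]
lemma xxz (m : ℤ) : xB * (xB * zB ^ m) = zB ^ (m + 1) := by rw [xx_mul, zm_succ]
lemma yyy_mul (g : B3) : yB * (yB * (yB * g)) = zB * g := by
  rw [← mul_assoc, ← mul_assoc, hy3']

def be (b : Bool) : ℕ := cond b 1 0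
@[simp] lemma be_true : be true = 1 := rfl
@[simp] lemma be_false : be false = 0 := rfl

noncomputable def letterB : Fin 2 → B3
  | 0 => xB * yB
  | 1 => xB * (yB * yB)

@[simp] lemma letterB_zero : letterB 0 = xB * yB := rfl
@[simp] lemma letterB_one : letterB 1 = xB * (yB * yB) := rfl

noncomputable def wListB (l : List (Fin 2)) : B3 := (l.map letterB).prod

@[simp] lemma wListB_nil : wListB [] = 1 := rfl

lemma wListB_concat (l : List (Fin 2)) (i : Fin 2) :
    wListB (l ++ [i]) = wListB l * letterB i := by
  simp [wListB]

/-- Normal-form set for `B3` elements. -/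
def SB (g : B3) : Prop :=
  ∃ (m : ℤ) (e d : Bool) (l : List (Fin 2)),
    g = xB ^ be e * wListB l * xB ^ be d * zB ^ m

lemma SB_one : SB 1 := ⟨0, false, false, [], by simp⟩

lemma SB_mul_zpow {g : B3} (h : SB g) (n : ℤ) : SB (g * zB ^ n) := by
  obtain ⟨m, e, d, l, rfl⟩ := h
  exact ⟨m + n, e, d, l, by rw [mul_assoc, ← zpow_add]⟩

lemma SB_mul_x {g : B3} (h : SB g) : SB (g * xB) := by
  obtain ⟨m, e, d, l, rfl⟩ := h
  cases d
  · refine ⟨m, e, true, l, ?_⟩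
    simp only [be_false, be_true, pow_zero, pow_one, one_mul, mul_one, mul_assoc]
    rw [zmx]
  · refine ⟨m + 1, e, false, l, ?_⟩
    simp only [be_false, be_true, pow_zero, pow_one, one_mul, mul_one, mul_assoc]
    rw [zmx, xxz]

lemma SB_mul_xinv {g : B3} (h : SB g) : SB (g * xB⁻¹) := by
  have hxi : xB⁻¹ = xB * zB ^ (-1 : ℤ) := by
    rw [zpow_neg_one, zB_def]
    group
  rw [hxi, ← mul_assoc]
  exact SB_mul_zpow (SB_mul_x h) (-1)

lemma SB_mul_y {g : B3} (h : SB g) : SB (g * yB) := by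
  obtain ⟨m, e, d, l, rfl⟩ := h
  cases d
  · rcases List.eq_nil_or_concat l with rfl | ⟨l', i, rfl⟩
    · cases e
      · refine ⟨m - 1, true, false, [0], ?_⟩
        simp only [be_false, be_true, pow_zero, pow_one, one_mul, mul_one, wListB,
          List.map_cons, List.map_nil, List.prod_cons, List.prod_nil, letterB_zero,
          mul_assoc]
        rw [zmy, xx_mul, zy_mul, zm_succ]
        group
      · refine ⟨m, false, false, [0], ?_⟩
        simp only [be_false, be_true, pow_zero, pow_one, one_mul, mul_one, wListB,
          List.map_cons, List.map_nil, List.prod_cons, List.prod_nil, letterB_zero,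
          mul_assoc]
        rw [zmy]
    · rcases fin2 i with rfl | rfl
      · refine ⟨m, e, false, l' ++ [1], ?_⟩
        simp only [List.concat_eq_append, wListB_concat, letterB_zero, letterB_one,
          be_false, be_true, pow_zero, pow_one, one_mul, mul_one, mul_assoc]
        rw [zmy]
      · refine ⟨m + 1, e, true, l', ?_⟩
        simp only [List.concat_eq_append, wListB_concat, letterB_zero, letterB_one,
          be_false, be_true, pow_zero, pow_one, one_mul, mul_one, mul_assoc]
        rw [zmy, yyy_mul, zm_succ]
  · refine ⟨m, e, false, l ++ [0], ?_⟩
    simp only [wListB_concat, letterB_zero, be_false, be_true, pow_zero, pow_one,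
      one_mul, mul_one, mul_assoc]
    rw [zmy]

lemma SB_mul_yinv {g : B3} (h : SB g) : SB (g * yB⁻¹) := by
  have hyi : yB⁻¹ = yB * (yB * zB ^ (-1 : ℤ)) := by
    rw [zpow_neg_one, ← hy3']
    group
  rw [hyi, show g * (yB * (yB * zB ^ (-1:ℤ))) = g * yB * yB * zB ^ (-1:ℤ) from by group]
  exact SB_mul_zpow (SB_mul_y (SB_mul_y h)) (-1)

lemma hs1 : s1 = yB⁻¹ * xB := by rw [yB, xB]; group

lemma hs2 : s2 = xB * yB⁻¹ := by
  rw [yB, xB]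
  nth_rewrite 1 [braid]
  group

lemma SB_mul_s1 {g : B3} (h : SB g) : SB (g * s1) := by
  rw [hs1, ← mul_assoc]
  exact SB_mul_x (SB_mul_yinv h)

lemma SB_mul_s2 {g : B3} (h : SB g) : SB (g * s2) := by
  rw [hs2, ← mul_assoc]
  exact SB_mul_yinv (SB_mul_x h)

lemma SB_mul_s1inv {g : B3} (h : SB g) : SB (g * s1⁻¹) := by
  rw [hs1, mul_inv_rev, inv_inv, ← mul_assoc]
  exact SB_mul_y (SB_mul_xinv h)

lemma SB_mul_s2inv {g : B3} (h : SB g) : SB (g * s2⁻¹) := by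
  rw [hs2, mul_inv_rev, inv_inv, ← mul_assoc]
  exact SB_mul_xinv (SB_mul_y h)

lemma SB_all (g : B3) : SB g := by
  obtain ⟨w, rfl⟩ := mk3_surjective g
  have key : ∀ w : FreeGroup (Fin 2), ∀ g : B3, SB g → SB (g * mk3 w) := by
    intro w
    refine FreeGroup.induction_on w ?_ ?_ ?_ ?_
    · intro g hg; simpa using hg
    · intro i g hg
      rcases fin2 i with rfl | rfl
      · exact SB_mul_s1 hg
      · exact SB_mul_s2 hg
    · intro i _ g hg
      rw [_root_.map_inv]
      rcases fin2 i with rfl | rfl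
      · exact SB_mul_s1inv hg
      · exact SB_mul_s2inv hg
    · intro a b ha hb g hg
      rw [_root_.map_mul, ← mul_assoc]
      exact hb _ (ha _ hg)
  simpa using key w 1 SB_one

lemma T2_eq : (T 2 : LP) = (T 1)^2 := by rw [T_pow]; norm_num
lemma T3_eq : (T 3 : LP) = (T 1)^3 := by rw [T_pow]; norm_num
lemma T4_eq : (T 4 : LP) = (T 1)^4 := by rw [T_pow]; norm_num
lemma T6_eq : (T 6 : LP) = (T 1)^6 := by rw [T_pow]; norm_num

def cw (l : List (Fin 2)) : ℤ := (l.map (fun i => if i = 0 then (4 : ℤ) else 6)).sum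

@[simp] lemma cw_nil : cw [] = 0 := rfl
lemma cw_cons (i : Fin 2) (l : List (Fin 2)) :
    cw (i :: l) = (if i = 0 then (4 : ℤ) else 6) + cw l := by simp [cw]

lemma wListB_cons (i : Fin 2) (l : List (Fin 2)) :
    wListB (i :: l) = letterB i * wListB l := by simp [wListB]

section Pi

variable (π : B3 →* GL (Fin 2) (LaurentPolynomial ℤ))
  (hπ : ∀ i : Fin 2, (π (PresentedGroup.of i) : Matrix (Fin 2) (Fin 2) (LaurentPolynomial ℤ)) = BurauA i)

lemma pm_mul (a b : B3) : (π (a * b) : M2) = (π a : M2) * (π b : M2) := by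
  rw [_root_.map_mul, Units.val_mul]

include hπ

lemma pm_s1 : (π s1 : M2) = BurauA 0 := hπ 0
lemma pm_s2 : (π s2 : M2) = BurauA 1 := hπ 1

lemma pm_x : (π xB : M2) = (T 3 : LP) • J2 := by
  rw [xB, pm_mul, pm_mul, pm_s1 π hπ, pm_s2 π hπ]
  refine Matrix.ext fun i j => ?_
  rcases fin2 i with rfl | rfl <;> rcases fin2 j with rfl | rfl <;>
  · simp only [BurauA, J2, Cm, Matrix.mul_apply, Fin.sum_univ_two, Matrix.smul_apply,
      smul_eq_mul, Matrix.cons_val', Matrix.cons_val_zero, Matrix.cons_val_one,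
      Matrix.head_cons, Matrix.head_fin_const, Matrix.empty_val',
      Matrix.cons_val_fin_one, Matrix.of_apply]
    simp only [T2_eq, T3_eq, T4_eq, T6_eq]
    ring

lemma pm_y : (π yB : M2) = BurauA 0 * BurauA 1 := by
  rw [yB, pm_mul, pm_s1 π hπ, pm_s2 π hπ]

lemma pm_letter0 : (π (letterB 0) : M2) = (T 4 : LP) • Cm 0 := by
  rw [letterB_zero, pm_mul, pm_x π hπ, pm_y π hπ]
  refine Matrix.ext fun i j => ?_
  rcases fin2 i with rfl | rfl <;> rcases fin2 j with rfl | rfl <;>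
  · simp only [BurauA, J2, Cm, Matrix.mul_apply, Fin.sum_univ_two, Matrix.smul_apply,
      smul_eq_mul, Matrix.cons_val', Matrix.cons_val_zero, Matrix.cons_val_one,
      Matrix.head_cons, Matrix.head_fin_const, Matrix.empty_val',
      Matrix.cons_val_fin_one, Matrix.of_apply]
    simp only [T2_eq, T3_eq, T4_eq, T6_eq]
    ring

lemma pm_letter1 : (π (letterB 1) : M2) = (T 6 : LP) • Cm 1 := by
  rw [letterB_one, pm_mul, pm_mul, pm_x π hπ, pm_y π hπ]
  refine Matrix.ext fun i j => ?_
  rcases fin2 i with rfl | rfl <;> rcases fin2 j with rfl | rfl <;>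
  · simp only [BurauA, J2, Cm, Matrix.mul_apply, Fin.sum_univ_two, Matrix.smul_apply,
      smul_eq_mul, Matrix.cons_val', Matrix.cons_val_zero, Matrix.cons_val_one,
      Matrix.head_cons, Matrix.head_fin_const, Matrix.empty_val',
      Matrix.cons_val_fin_one, Matrix.of_apply]
    simp only [T2_eq, T3_eq, T4_eq, T6_eq]
    ring

lemma pm_z : (π zB : M2) = (T 6 : LP) • 1 := by
  rw [zB_def, pm_mul, pm_x π hπ, smulT_mul, J2_mul_J2]
  norm_num

lemma pm_zpow (m : ℤ) : (π (zB ^ m) : M2) = (T (6 * m) : LP) • 1 := by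
  have hnat : ∀ n : ℕ, (π (zB ^ (n : ℤ)) : M2) = (T (6 * n) : LP) • 1 := by
    intro n
    rw [zpow_natCast, _root_.map_pow, Units.val_pow_eq_pow_val, pm_z π hπ, smul_pow, one_pow,
      T_pow, mul_comm (n : ℤ) 6]
  rcases m with n | n
  · exact hnat n
  · have h1 : (π (zB ^ (Int.negSucc n)) : M2) * (π (zB ^ ((n+1 : ℕ) : ℤ)) : M2) = 1 := by
      rw [← pm_mul, ← zpow_add, show (Int.negSucc n + ((n+1 : ℕ) : ℤ)) = 0 from by
        rw [Int.negSucc_eq]; push_cast; ring, zpow_zero, _root_.map_one, Units.val_one]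
    rw [hnat (n+1)] at h1
    have h2 : ((T (6 * ((n+1 : ℕ) : ℤ)) : LP) • (1 : M2)) * ((T (6 * Int.negSucc n) : LP) • (1 : M2)) = 1 := by
      rw [smulT_mul, mul_one, show (6 * ((n+1:ℕ):ℤ) + 6 * Int.negSucc n) = 0 from by
        rw [Int.negSucc_eq]; push_cast; ring, T_zero, one_smul]
    exact left_inv_eq_right_inv h1 h2

lemma pm_w (l : List (Fin 2)) : (π (wListB l) : M2) = (T (cw l) : LP) • prodC l := by
  induction l with
  | nil => rw [wListB_nil, _root_.map_one, Units.val_one, cw_nil, prodC_nil, T_zero, one_smul]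
  | cons i l ih =>
    rw [wListB_cons, pm_mul, ih, prodC_cons, cw_cons]
    rcases fin2 i with rfl | rfl
    · rw [pm_letter0 π hπ, smulT_mul, if_pos rfl]
    · rw [pm_letter1 π hπ, smulT_mul, if_neg (by decide : ¬(1 : Fin 2) = 0)]

lemma pm_xpow_be (e : Bool) :
    (π (xB ^ be e) : M2) = (T (3 * (be e : ℤ)) : LP) • J2 ^ be e := by
  cases e
  · simp only [be_false, pow_zero, map_one, Units.val_one]
    norm_num
  · simp only [be_true, pow_one]
    rw [pm_x π hπ]
    norm_num

lemma pm_norm (m : ℤ) (e d : Bool) (l : List (Fin 2)) :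
    (π (xB ^ be e * wListB l * xB ^ be d * zB ^ m) : M2)
      = (T (3 * (be e : ℤ) + cw l + 3 * (be d : ℤ) + 6 * m) : LP)
          • (J2 ^ be e * prodC l * J2 ^ be d) := by
  rw [pm_mul, pm_mul, pm_mul, pm_zpow π hπ, pm_w π hπ, pm_xpow_be π hπ e,
    pm_xpow_be π hπ d, smulT_mul, smulT_mul, smulT_mul, mul_one]

end Pi

lemma projlen_one : projlen (1 : M2) = 0 := by
  have := Bnd_one.projlen_eq
  simpa using this

lemma Xd_form (m : ℤ) (e d : Bool) :
    (T (3 * (be e : ℤ) + cw [] + 3 * (be d : ℤ) + 6 * m) : LP)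
        • (J2 ^ be e * prodC [] * J2 ^ be d)
      = ((T 3 : LP) • J2) ^ (2 * m + (be e : ℤ) + (be d : ℤ)) := by
  rw [Xzpow]
  cases e <;> cases d <;>
    simp only [be_true, be_false, Nat.cast_one, Nat.cast_zero, cw_nil, prodC_nil,
      pow_zero, pow_one, one_mul, mul_one, J2_mul_J2]
  · have hev : Even (2 * m + 0 + 0) := ⟨m, by ring⟩
    simp only [hev, if_true]
    congr 1
    ring
  · have hodd : ¬ Even (2 * m + 0 + 1) := by rintro ⟨r, hr⟩; omega
    simp only [hodd, if_false]
    congr 1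
    ring
  · have hodd : ¬ Even (2 * m + 1 + 0) := by rintro ⟨r, hr⟩; omega
    simp only [hodd, if_false]
    congr 1
    ring
  · have hev : Even (2 * m + 1 + 1) := ⟨m + 1, by ring⟩
    simp only [hev, if_true]
    congr 1
    ring

set_option maxHeartbeats 1000000 in
lemma main_decomp : ∀ (π : B3 →* GL (Fin 2) (LaurentPolynomial ℤ)),
    (∀ i : Fin 2, (π (PresentedGroup.of i) : Matrix (Fin 2) (Fin 2) (LaurentPolynomial ℤ)) = BurauA i) →
    ∀ x : B3, ∃ (m : ℤ) (e d : Bool) (l : List (Fin 2)),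
      x = xB ^ be e * wListB l * xB ^ be d * zB ^ m ∧
      (π x : M2) = (T (3 * (be e : ℤ) + cw l + 3 * (be d : ℤ) + 6 * m) : LP)
          • (J2 ^ be e * prodC l * J2 ^ be d) ∧
      projlen ((π x : M2)) = 2 * l.length := by
  intro π hπ x
  obtain ⟨m, e, d, l, rfl⟩ := SB_all x
  have hm := pm_norm π hπ m e d l
  refine ⟨m, e, d, l, rfl, hm, ?_⟩
  have hB : Bnd (J2 ^ be e * prodC l * J2 ^ be d) 0 (2 * l.length) := by
    have h0 := Bnd_prodC l
    cases e <;> cases d <;>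
      simp only [be_true, be_false, pow_zero, pow_one, one_mul, mul_one]
    · exact h0
    · exact Bnd_mul_J2 h0
    · exact Bnd_J2_mul h0
    · exact Bnd_mul_J2 (Bnd_J2_mul h0)
  have h2 := (Bnd_smulT (3 * (be e : ℤ) + cw l + 3 * (be d : ℤ) + 6 * m) hB).projlen_eq
  rw [hm, h2]
  ring

set_option maxHeartbeats 1000000 in
/-- A `projlen`-type statistic detecting Garside length implies faithfulness; concretely for
`B3`: every matrix `M` in the image of the Burau representation with `projlen M = 0` is an
integer power of `v³ · J2` (the Burau matrix of `Δ`); `(v³ · J2)^d = 1` iff `d = 0`; and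
consequently the only element of `B3` mapping to the identity matrix is the identity braid. -/
theorem burau_three_strand_projlen_faithful :
    (∀ π : B3 →* GL (Fin 2) (LaurentPolynomial ℤ),
      (∀ i : Fin 2, (π (PresentedGroup.of i) : Matrix (Fin 2) (Fin 2) (LaurentPolynomial ℤ)) = BurauA i) →
      ∀ x : B3, projlen (π x) = 0 →
        ∃ d : ℤ, (π x : Matrix (Fin 2) (Fin 2) (LaurentPolynomial ℤ)) =
          ((T 3 : LaurentPolynomial ℤ) • J2) ^ d) ∧
    (∀ d : ℤ, ((T 3 : LaurentPolynomial ℤ) • J2) ^ d = 1 ↔ d = 0) ∧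
    (∀ π : B3 →* GL (Fin 2) (LaurentPolynomial ℤ),
      (∀ i : Fin 2, (π (PresentedGroup.of i) : Matrix (Fin 2) (Fin 2) (LaurentPolynomial ℤ)) = BurauA i) →
      ∀ x : B3, (π x : Matrix (Fin 2) (Fin 2) (LaurentPolynomial ℤ)) = 1 → x = 1) := by
  have main := main_decomp
  refine ⟨?_, ?_, ?_⟩
  · intro π hπ x hpl
    obtain ⟨m, e, d, l, hxeq, hmtx, hproj⟩ := main π hπ x
    have hl : l = [] := by
      rw [hpl] at hproj
      cases l with
      | nil => rfl
      | cons a t =>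
        exfalso
        rw [List.length_cons] at hproj
        push_cast at hproj
        omega
    subst hl
    exact ⟨2 * m + (be e : ℤ) + (be d : ℤ), by rw [hmtx, Xd_form]⟩
  · exact Xzpow_eq_one_iff
  · intro π hπ x hx1
    obtain ⟨m, e, d, l, hxeq, hmtx, hproj⟩ := main π hπ x
    have hl : l = [] := by
      rw [hx1, projlen_one] at hproj
      cases l with
      | nil => rfl
      | cons a t =>
        exfalso
        rw [List.length_cons] at hproj
        push_cast at hproj
        omega
    subst hl
    rw [hx1, Xd_form] at hmtx
    have hd0 : 2 * m + (be e : ℤ) + (be d : ℤ) = 0 := (Xzpow_eq_one_iff _).mp hmtx.symm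
    cases e <;> cases d <;> simp only [be_true, be_false, Nat.cast_one, Nat.cast_zero] at hd0
    · have hm0 : m = 0 := by omega
      rw [hxeq, hm0]
      simp
    · exfalso; omega
    · exfalso; omega
    · have hm1 : m = -1 := by omega
      rw [hxeq, hm1]
      simp only [be_true, pow_one, wListB_nil, mul_one]
      rw [zpow_neg_one, zB_def]
      group
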